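/- Let O be a simplicial right brace algebra with coboundary d(p) = m ∘ p + Σ_{i=1}^{|p|+1} (−1)^i D_i(p) and boundary ∂(p) = Σ_{i=1}^{n} (−1)^i p ∘_i 1₀ for p ∈ O(n). Then d and ∂ anticommute: ∂ ∘ d = − d ∘ ∂, and hence (O, ∂, d) is a bicomplex with total differential D = d + ∂. -/

import Mathlib

open scoped BigOperators TensorProduct

/-- A (connected, unitary, multiplicative) operad in `K`-vector spaces, presented via
partial compositions `∘ᵢ : O(p) ⊗ O(q) → O(p+q-1)`, with unit `1_O ∈ O(1)`,
distinguished element `1₀ ∈ O(0)` (connectedness: `O(0) ≅ K` with basis `1₀`),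
and a multiplication `m ∈ O(2)` with `m ∘₁ m = m ∘₂ m`. -/
structure POperad (K : Type) [Field K] where
  O : ℕ → Type
  [acg : ∀ n, AddCommGroup (O n)]
  [mod : ∀ n, Module K (O n)]
  comp : ∀ {p q : ℕ}, O p → O q → ℕ → O (p + q - 1)
  one0 : O 0
  one1 : O 1
  mul : O 2
  comp_add_left : ∀ {p q : ℕ} (x x' : O p) (y : O q) (i : ℕ),
    comp (x + x') y i = comp x y i + comp x' y i
  comp_add_right : ∀ {p q : ℕ} (x : O p) (y y' : O q) (i : ℕ),
    comp x (y + y') i = comp x y i + comp x y' i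
  comp_smul_left : ∀ {p q : ℕ} (c : K) (x : O p) (y : O q) (i : ℕ),
    comp (c • x) y i = c • comp x y i
  comp_smul_right : ∀ {p q : ℕ} (c : K) (x : O p) (y : O q) (i : ℕ),
    comp x (c • y) i = c • comp x y i
  comp_one_right : ∀ {p : ℕ} (x : O p) (i : ℕ), 1 ≤ i → i ≤ p → HEq (comp x one1 i) x
  comp_one_left : ∀ {q : ℕ} (y : O q), HEq (comp one1 y 1) y
  mul_mul : comp mul mul 1 = comp mul mul 2
  assoc_seq : ∀ {p q r : ℕ} (x : O p) (y : O q) (z : O r) (i j : ℕ),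
    1 ≤ i → i ≤ p → 1 ≤ j → j ≤ q →
    HEq (comp (comp x y i) z (j + i - 1)) (comp x (comp y z j) i)
  assoc_par : ∀ {p q r : ℕ} (x : O p) (y : O q) (z : O r) (i j : ℕ),
    1 ≤ i → i < j → j ≤ p →
    HEq (comp (comp x y i) z (j + q - 1)) (comp (comp x z j) y i)

attribute [instance] POperad.acg POperad.mod

/-- Cast along an equality of arities. -/
def POperad.pcast {K : Type} [Field K] (𝒪 : POperad K) {a b : ℕ} (h : a = b) (x : 𝒪.O a) :
    𝒪.O b := h ▸ x

/-- The simplicial boundary `∂(p) = Σ_{i=1}^n (-1)^i p ∘ᵢ 1₀`. -/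
noncomputable def POperad.del {K : Type} [Field K] (𝒪 : POperad K) {n : ℕ}
    (p : 𝒪.O n) : 𝒪.O (n - 1) :=
  ∑ i ∈ Finset.Icc 1 n, ((-1 : ℤ) ^ i) • 𝒪.comp p 𝒪.one0 i

/-- The coboundary `d(p) = m ∘ p + Σ_{i=1}^{|p|+1} (-1)^i Dᵢ(p)`, where
`m ∘ p = m{p} = (-1)^{|p|} (m ∘₁ p) + m ∘₂ p` and `Dᵢ(p) = p ∘ᵢ m`. -/
noncomputable def POperad.dd {K : Type} [Field K] (𝒪 : POperad K) {n : ℕ}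
    (p : 𝒪.O n) : 𝒪.O (n + 1) :=
  ((-1 : ℤ) ^ (n + 1)) • 𝒪.pcast (by omega) (𝒪.comp 𝒪.mul p 1)
    + 𝒪.pcast (by omega) (𝒪.comp 𝒪.mul p 2)
    + ∑ i ∈ Finset.Icc 1 n, ((-1 : ℤ) ^ i) • 𝒪.comp p 𝒪.mul i

namespace POperad
variable {K : Type} [Field K] (𝒪 : POperad K)

@[simp] lemma pcast_refl {a : ℕ} (h : a = a) (x : 𝒪.O a) : 𝒪.pcast h x = x := rfl

lemma pcast_add {a b : ℕ} (h : a = b) (x y : 𝒪.O a) :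
    𝒪.pcast h (x + y) = 𝒪.pcast h x + 𝒪.pcast h y := by subst h; rfl

lemma pcast_zsmul {a b : ℕ} (h : a = b) (z : ℤ) (x : 𝒪.O a) :
    𝒪.pcast h (z • x) = z • 𝒪.pcast h x := by subst h; rfl

lemma pcast_sum {ι : Type} (s : Finset ι) {a b : ℕ} (h : a = b) (f : ι → 𝒪.O a) :
    𝒪.pcast h (∑ i ∈ s, f i) = ∑ i ∈ s, 𝒪.pcast h (f i) := by subst h; rfl

lemma pcast_pcast {a b c : ℕ} (h : a = b) (h' : b = c) (x : 𝒪.O a) :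
    𝒪.pcast h' (𝒪.pcast h x) = 𝒪.pcast (h.trans h') x := by subst h; rfl

lemma pcast_comp_left {a a' q : ℕ} (h : a = a') (h2 : a + q - 1 = a' + q - 1)
    (x : 𝒪.O a) (y : 𝒪.O q) (i : ℕ) :
    𝒪.comp (𝒪.pcast h x) y i = 𝒪.pcast h2 (𝒪.comp x y i) := by subst h; rfl

lemma eq_pcast_of_heq {a b : ℕ} (h : a = b) {x : 𝒪.O a} {y : 𝒪.O b} (hh : HEq x y) :
    y = 𝒪.pcast h x := by subst h; exact (eq_of_heq hh).symm

/-- left composition as additive hom -/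
def compL {p q : ℕ} (y : 𝒪.O q) (i : ℕ) : 𝒪.O p →+ 𝒪.O (p + q - 1) :=
  AddMonoidHom.mk' (fun x => 𝒪.comp x y i) (fun a b => 𝒪.comp_add_left a b y i)

def compR {p q : ℕ} (x : 𝒪.O p) (i : ℕ) : 𝒪.O q →+ 𝒪.O (p + q - 1) :=
  AddMonoidHom.mk' (fun y => 𝒪.comp x y i) (fun a b => 𝒪.comp_add_right x a b i)

lemma comp_zsmul_left {p q : ℕ} (z : ℤ) (x : 𝒪.O p) (y : 𝒪.O q) (i : ℕ) :
    𝒪.comp (z • x) y i = z • 𝒪.comp x y i := map_zsmul (𝒪.compL y i) z x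

lemma comp_zsmul_right {p q : ℕ} (z : ℤ) (x : 𝒪.O p) (y : 𝒪.O q) (i : ℕ) :
    𝒪.comp x (z • y) i = z • 𝒪.comp x y i := map_zsmul (𝒪.compR x i) z y

lemma comp_sum_left {ι : Type} (s : Finset ι) {p q : ℕ} (f : ι → 𝒪.O p) (y : 𝒪.O q) (i : ℕ) :
    𝒪.comp (∑ j ∈ s, f j) y i = ∑ j ∈ s, 𝒪.comp (f j) y i := map_sum (𝒪.compL y i) f s

lemma comp_sum_right {ι : Type} (s : Finset ι) {p q : ℕ} (x : 𝒪.O p) (f : ι → 𝒪.O q) (i : ℕ) :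
    𝒪.comp x (∑ j ∈ s, f j) i = ∑ j ∈ s, 𝒪.comp x (f j) i := map_sum (𝒪.compR x i) f s

lemma Icc_sum {G : Type} [AddCommGroup G] (M : ℕ) (f : ℕ → G) :
    ∑ i ∈ Finset.Icc 1 M, f i = ∑ i ∈ Finset.range M, f (i + 1) := by
  rw [← Finset.Ico_add_one_right_eq_Icc, Finset.sum_Ico_eq_sum_range]
  simp [Nat.add_comm]


lemma pcast_comp_left' {a a' q : ℕ} (h : a = a') (x : 𝒪.O a) (y : 𝒪.O q) (i : ℕ) :
    𝒪.comp (𝒪.pcast h x) y i = 𝒪.pcast (by rw [h]) (𝒪.comp x y i) := by subst h; rfl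

lemma eps_eq {a b : ℕ} (h : a % 2 = b % 2) : ((-1:ℤ))^a = (-1)^b := by
  conv_lhs => rw [← Nat.div_add_mod a 2, pow_add, pow_mul]
  conv_rhs => rw [← Nat.div_add_mod b 2, pow_add, pow_mul]
  simp [h]

lemma eps_smul {G : Type} [AddCommGroup G] {a b : ℕ} (h : a % 2 = b % 2) (x : G) :
    ((-1:ℤ)^a) • x = ((-1:ℤ)^b) • x := by rw [eps_eq h]

lemma eps_smul_neg {G : Type} [AddCommGroup G] {a b : ℕ} (h : a % 2 ≠ b % 2) (x : G) :
    ((-1:ℤ)^a) • x = -(((-1:ℤ)^b) • x) := by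
  have h1 : ((-1:ℤ))^(b+1) = -(-1)^b := by rw [pow_succ]; ring
  rw [← neg_smul, ← h1]
  exact eps_smul (by omega) x
lemma eps_sq (a : ℕ) : ((-1:ℤ))^(a+2) = (-1)^a := by simp [pow_add]

/-- Common normal form for both sides. -/
noncomputable def EE (m : ℕ) (p : 𝒪.O (m+1)) : 𝒪.O (m+1) :=
  ((-1:ℤ)^(m+1)) • ∑ k ∈ Finset.range (m+1), ((-1:ℤ)^(k+1)) •
      𝒪.pcast (by omega) (𝒪.comp 𝒪.mul (𝒪.comp p 𝒪.one0 (k+1)) 1)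
  + ∑ k ∈ Finset.range (m+1), ((-1:ℤ)^(k+1)) •
      𝒪.pcast (by omega) (𝒪.comp 𝒪.mul (𝒪.comp p 𝒪.one0 (k+1)) 2)
  + ∑ i ∈ Finset.range m, ∑ k ∈ Finset.range (m+1), ((-1:ℤ)^(i+k)) •
      𝒪.pcast (by omega) (𝒪.comp (𝒪.comp p 𝒪.one0 (k+1)) 𝒪.mul (i+1))

lemma lemB (m : ℕ) (p : 𝒪.O (m+1)) :
    𝒪.pcast (by omega : m+1-1+1 = m+1) (𝒪.dd (𝒪.del p)) = 𝒪.EE m p := by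
  rw [dd, del, EE]
  simp only [Nat.add_sub_cancel, Icc_sum, comp_sum_right, comp_zsmul_right,
    comp_sum_left, comp_zsmul_left, pcast_add, pcast_sum, pcast_zsmul, pcast_pcast,
    smul_smul, ← pow_add]
  refine congrArg₂ (· + ·) (congrArg₂ (· + ·) ?_ ?_) ?_
  · rw [Finset.smul_sum]
  · rfl
  · refine Finset.sum_congr rfl fun i _ => ?_
    rw [Finset.smul_sum]
    refine Finset.sum_congr rfl fun k _ => ?_
    rw [smul_smul, ← pow_add]
    congr 1
    rw [show i+1+(k+1) = i+k+2 by omega, eps_sq]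
section Atoms
variable {m : ℕ}

/-- `(m ∘₁ p) ∘_{n+1} 1₀ = p` where `n = m+1`. -/
lemma LA_top (hm2 : 𝒪.comp 𝒪.mul 𝒪.one0 2 = 𝒪.one1) (p : 𝒪.O (m+1)) :
    𝒪.comp (𝒪.comp 𝒪.mul p 1) 𝒪.one0 (m+1+1)
      = 𝒪.pcast (by omega) p := by
  refine 𝒪.eq_pcast_of_heq _ ?_
  have h1 := 𝒪.assoc_par 𝒪.mul p 𝒪.one0 1 2 le_rfl one_lt_two le_rfl
  have h2 : 𝒪.comp (𝒪.comp 𝒪.mul 𝒪.one0 2) p 1 = 𝒪.comp 𝒪.one1 p 1 :=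
    congrArg (fun y => 𝒪.comp y p 1) hm2
  have e : 𝒪.comp (𝒪.comp 𝒪.mul p 1) 𝒪.one0 (m+1+1)
      = 𝒪.comp (𝒪.comp 𝒪.mul p 1) 𝒪.one0 (2+(m+1)-1) := by
    congr 1; omega
  rw [e]
  exact ((h1.trans (heq_of_eq h2)).trans (𝒪.comp_one_left p)).symm

/-- `(m ∘₁ p) ∘_{j+1} 1₀ = m ∘₁ (p ∘_{j+1} 1₀)` for `j+1 ≤ n`. -/
lemma LA_seq (p : 𝒪.O (m+1)) (j : ℕ) (hj : j < m+1) :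
    𝒪.comp (𝒪.comp 𝒪.mul p 1) 𝒪.one0 (j+1)
      = 𝒪.pcast (by omega) (𝒪.comp 𝒪.mul (𝒪.comp p 𝒪.one0 (j+1)) 1) := by
  refine 𝒪.eq_pcast_of_heq _ ?_
  have h1 := 𝒪.assoc_seq 𝒪.mul p 𝒪.one0 1 (j+1) le_rfl one_le_two (by omega) (by omega)
  rw [show j+1+1-1 = j+1 by omega] at h1
  exact h1.symm

/-- `(m ∘₂ p) ∘₁ 1₀ = p`. -/
lemma LB_bot (hm1 : 𝒪.comp 𝒪.mul 𝒪.one0 1 = 𝒪.one1) (p : 𝒪.O (m+1)) :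
    𝒪.comp (𝒪.comp 𝒪.mul p 2) 𝒪.one0 (0+1)
      = 𝒪.pcast (by omega) p := by
  refine 𝒪.eq_pcast_of_heq _ ?_
  have h1 := 𝒪.assoc_par 𝒪.mul 𝒪.one0 p 1 2 le_rfl one_lt_two le_rfl
  have h2 : 𝒪.comp (𝒪.comp 𝒪.mul 𝒪.one0 1) p (2+0-1) = 𝒪.comp 𝒪.one1 p (2+0-1) :=
    congrArg (fun y => 𝒪.comp y p (2+0-1)) hm1
  exact ((𝒪.comp_one_left p).symm.trans (heq_of_eq h2.symm)).trans h1

/-- `(m ∘₂ p) ∘_{k+2} 1₀ = m ∘₂ (p ∘_{k+1} 1₀)` for `k+1 ≤ n`. -/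
lemma LB_seq (p : 𝒪.O (m+1)) (k : ℕ) (hk : k < m+1) :
    𝒪.comp (𝒪.comp 𝒪.mul p 2) 𝒪.one0 (k+1+1)
      = 𝒪.pcast (by omega) (𝒪.comp 𝒪.mul (𝒪.comp p 𝒪.one0 (k+1)) 2) := by
  refine 𝒪.eq_pcast_of_heq _ ?_
  have h1 := 𝒪.assoc_seq 𝒪.mul p 𝒪.one0 2 (k+1) one_le_two le_rfl (by omega) (by omega)
  rw [show k+1+2-1 = k+1+1 by omega] at h1
  exact h1.symm

/-- `(p ∘_{i+1} m) ∘_{i+1} 1₀ = p`. -/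
lemma LC_diag (hm1 : 𝒪.comp 𝒪.mul 𝒪.one0 1 = 𝒪.one1) (p : 𝒪.O (m+1)) (i : ℕ) (hi : i < m+1) :
    𝒪.comp (𝒪.comp p 𝒪.mul (i+1)) 𝒪.one0 (i+1)
      = 𝒪.pcast (by omega) p := by
  refine 𝒪.eq_pcast_of_heq _ ?_
  have h1 := 𝒪.assoc_seq p 𝒪.mul 𝒪.one0 (i+1) 1 (by omega) (by omega) le_rfl one_le_two
  rw [show 1+(i+1)-1 = i+1 by omega] at h1
  rw [hm1] at h1
  exact (h1.trans (𝒪.comp_one_right p (i+1) (by omega) (by omega))).symm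

/-- `(p ∘_{i+1} m) ∘_{i+2} 1₀ = p`. -/
lemma LC_diag2 (hm2 : 𝒪.comp 𝒪.mul 𝒪.one0 2 = 𝒪.one1) (p : 𝒪.O (m+1)) (i : ℕ) (hi : i < m+1) :
    𝒪.comp (𝒪.comp p 𝒪.mul (i+1)) 𝒪.one0 (i+1+1)
      = 𝒪.pcast (by omega) p := by
  refine 𝒪.eq_pcast_of_heq _ ?_
  have h1 := 𝒪.assoc_seq p 𝒪.mul 𝒪.one0 (i+1) 2 (by omega) (by omega) one_le_two le_rfl
  rw [show 2+(i+1)-1 = i+1+1 by omega] at h1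
  rw [hm2] at h1
  exact (h1.trans (𝒪.comp_one_right p (i+1) (by omega) (by omega))).symm

/-- `(p ∘_{i+1} m) ∘_{j+1} 1₀ = (p ∘_{j+1} 1₀) ∘_i m` for `j < i`. -/
lemma LC_low (p : 𝒪.O (m+1)) (i j : ℕ) (hij : j < i) (hi : i < m+1) :
    𝒪.comp (𝒪.comp p 𝒪.mul (i+1)) 𝒪.one0 (j+1)
      = 𝒪.pcast (by omega) (𝒪.comp (𝒪.comp p 𝒪.one0 (j+1)) 𝒪.mul i) := by
  refine 𝒪.eq_pcast_of_heq _ ?_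
  have h1 := 𝒪.assoc_par p 𝒪.one0 𝒪.mul (j+1) (i+1) (by omega) (by omega) (by omega)
  rw [show i+1+0-1 = i by omega] at h1
  exact h1

/-- `(p ∘_{i+1} m) ∘_{k+2} 1₀ = (p ∘_{k+1} 1₀) ∘_{i+1} m` for `i < k`. -/
lemma LC_high (p : 𝒪.O (m+1)) (i k : ℕ) (hik : i < k) (hk : k < m+1) :
    𝒪.comp (𝒪.comp p 𝒪.mul (i+1)) 𝒪.one0 (k+1+1)
      = 𝒪.pcast (by omega) (𝒪.comp (𝒪.comp p 𝒪.one0 (k+1)) 𝒪.mul (i+1)) := by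
  refine 𝒪.eq_pcast_of_heq _ ?_
  have h1 := 𝒪.assoc_par p 𝒪.mul 𝒪.one0 (i+1) (k+1) (by omega) (by omega) (by omega)
  rw [show k+1+2-1 = k+1+1 by omega] at h1
  exact h1.symm

end Atoms
section Sums
variable {m : ℕ}

lemma hSA (hm2 : 𝒪.comp 𝒪.mul 𝒪.one0 2 = 𝒪.one1) (p : 𝒪.O (m+1)) :
    ∑ j ∈ Finset.range (m+1+1), ((-1:ℤ)^(j+1)) • ((-1:ℤ)^(m+1+1)) •
        𝒪.comp (𝒪.pcast (by omega : 2+(m+1)-1 = m+1+1) (𝒪.comp 𝒪.mul p 1)) 𝒪.one0 (j+1)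
      = -(((-1:ℤ)^(m+1)) • ∑ k ∈ Finset.range (m+1), ((-1:ℤ)^(k+1)) •
          𝒪.pcast (by omega) (𝒪.comp 𝒪.mul (𝒪.comp p 𝒪.one0 (k+1)) 1)) + p := by
  rw [Finset.sum_range_succ]
  congr 1
  · -- main part
    rw [Finset.smul_sum, ← Finset.sum_neg_distrib]
    refine Finset.sum_congr rfl fun j hj => ?_
    have hj' : j < m+1 := Finset.mem_range.mp hj
    rw [pcast_comp_left', LA_seq 𝒪 p j hj', pcast_pcast, smul_smul, smul_smul,
      ← pow_add, ← pow_add]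
    exact eps_smul_neg (by omega) _
  · -- last term j = m+1
    rw [pcast_comp_left', LA_top 𝒪 hm2 p, pcast_pcast, smul_smul, ← pow_add,
      Even.neg_one_pow ⟨m+2, by omega⟩, one_smul, pcast_refl]

lemma hSB (hm1 : 𝒪.comp 𝒪.mul 𝒪.one0 1 = 𝒪.one1) (p : 𝒪.O (m+1)) :
    ∑ j ∈ Finset.range (m+1+1), ((-1:ℤ)^(j+1)) •
        𝒪.comp (𝒪.pcast (by omega : 2+(m+1)-1 = m+1+1) (𝒪.comp 𝒪.mul p 2)) 𝒪.one0 (j+1)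
      = -(∑ k ∈ Finset.range (m+1), ((-1:ℤ)^(k+1)) •
          𝒪.pcast (by omega) (𝒪.comp 𝒪.mul (𝒪.comp p 𝒪.one0 (k+1)) 2)) - p := by
  rw [Finset.sum_range_succ']
  refine Eq.trans ?_ (sub_eq_add_neg _ _).symm
  congr 1
  · rw [← Finset.sum_neg_distrib]
    refine Finset.sum_congr rfl fun k hk => ?_
    have hk' : k < m+1 := Finset.mem_range.mp hk
    rw [pcast_comp_left', LB_seq 𝒪 p k hk', pcast_pcast]
    exact eps_smul_neg (by omega) _
  · rw [pcast_comp_left', LB_bot 𝒪 hm1 p, pcast_pcast, pcast_refl, pow_one, neg_smul,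
      one_smul]

end Sums
section BigSum
variable {m : ℕ}
set_option maxHeartbeats 2000000

lemma hSC (hm1 : 𝒪.comp 𝒪.mul 𝒪.one0 1 = 𝒪.one1)
    (hm2 : 𝒪.comp 𝒪.mul 𝒪.one0 2 = 𝒪.one1) (p : 𝒪.O (m+1)) :
    ∑ j ∈ Finset.range (m+1+1), ∑ i ∈ Finset.range (m+1), ((-1:ℤ)^(j+1)) • ((-1:ℤ)^(i+1)) •
        𝒪.comp (𝒪.comp p 𝒪.mul (i+1)) 𝒪.one0 (j+1)
      = -∑ i ∈ Finset.range m, ∑ k ∈ Finset.range (m+1), ((-1:ℤ)^(i+k)) •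
          𝒪.pcast (by omega) (𝒪.comp (𝒪.comp p 𝒪.one0 (k+1)) 𝒪.mul (i+1)) := by
  rw [Finset.sum_comm]
  have step1 : ∀ i ∈ Finset.range (m+1),
      ∑ j ∈ Finset.range (m+1+1), ((-1:ℤ)^(j+1)) • ((-1:ℤ)^(i+1)) •
        𝒪.comp (𝒪.comp p 𝒪.mul (i+1)) 𝒪.one0 (j+1)
      = (∑ j ∈ Finset.range i, ((-1:ℤ)^(i+j)) •
            𝒪.pcast (by omega) (𝒪.comp (𝒪.comp p 𝒪.one0 (j+1)) 𝒪.mul i))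
        + ∑ k ∈ Finset.Ico (i+1) (m+1), -(((-1:ℤ)^(i+k)) •
            𝒪.pcast (by omega) (𝒪.comp (𝒪.comp p 𝒪.one0 (k+1)) 𝒪.mul (i+1))) := by
    intro i hi
    have hi' : i < m+1 := Finset.mem_range.mp hi
    rw [Finset.range_eq_Ico,
        ← Finset.sum_Ico_consecutive _ (Nat.zero_le i) (by omega : i ≤ m+1+1),
        ← Finset.sum_Ico_consecutive _ (by omega : i ≤ i+1+1) (by omega : i+1+1 ≤ m+1+1)]
    have hmid : ∑ j ∈ Finset.Ico i (i+1+1), ((-1:ℤ)^(j+1)) • ((-1:ℤ)^(i+1)) •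
        𝒪.comp (𝒪.comp p 𝒪.mul (i+1)) 𝒪.one0 (j+1) = 0 := by
      rw [Finset.sum_Ico_succ_top (by omega : i ≤ i+1),
        Finset.sum_Ico_succ_top (le_refl i), Finset.Ico_self, Finset.sum_empty, zero_add]
      rw [LC_diag 𝒪 hm1 p i hi', LC_diag2 𝒪 hm2 p i hi']
      rw [smul_smul, smul_smul, ← pow_add, ← pow_add,
        Even.neg_one_pow ⟨i+1, by omega⟩, Odd.neg_one_pow ⟨i+1, by omega⟩,
        one_smul, neg_smul, one_smul]
      exact add_neg_cancel p
    have hlow : ∑ j ∈ Finset.Ico 0 i, ((-1:ℤ)^(j+1)) • ((-1:ℤ)^(i+1)) •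
        𝒪.comp (𝒪.comp p 𝒪.mul (i+1)) 𝒪.one0 (j+1)
        = ∑ j ∈ Finset.range i, ((-1:ℤ)^(i+j)) •
            𝒪.pcast (by omega) (𝒪.comp (𝒪.comp p 𝒪.one0 (j+1)) 𝒪.mul i) := by
      rw [← Finset.range_eq_Ico]
      refine Finset.sum_congr rfl fun j hj => ?_
      have hj' : j < i := Finset.mem_range.mp hj
      rw [LC_low 𝒪 p i j hj' hi', smul_smul, ← pow_add]
      exact eps_smul (by omega) _
    have hhigh : ∑ j ∈ Finset.Ico (i+1+1) (m+1+1), ((-1:ℤ)^(j+1)) • ((-1:ℤ)^(i+1)) •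
        𝒪.comp (𝒪.comp p 𝒪.mul (i+1)) 𝒪.one0 (j+1)
        = ∑ k ∈ Finset.Ico (i+1) (m+1), -(((-1:ℤ)^(i+k)) •
            𝒪.pcast (by omega) (𝒪.comp (𝒪.comp p 𝒪.one0 (k+1)) 𝒪.mul (i+1))) := by
      rw [← Finset.sum_Ico_add' (fun j => ((-1:ℤ)^(j+1)) • ((-1:ℤ)^(i+1)) •
        𝒪.comp (𝒪.comp p 𝒪.mul (i+1)) 𝒪.one0 (j+1)) (i+1) (m+1) 1]
      refine Finset.sum_congr rfl fun k hk => ?_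
      obtain ⟨hk1, hk2⟩ := Finset.mem_Ico.mp hk
      rw [LC_high 𝒪 p i k (by omega) (by omega), smul_smul, ← pow_add]
      exact eps_smul_neg (by omega) _
    rw [hmid, hlow, hhigh]
    simp only [zero_add, Finset.range_eq_Ico]
  have hP : ∑ i ∈ Finset.range (m+1), ∑ j ∈ Finset.range i, ((-1:ℤ)^(i+j)) •
        𝒪.pcast (by omega : m+1+0-1+2-1 = m+1) (𝒪.comp (𝒪.comp p 𝒪.one0 (j+1)) 𝒪.mul i)
      = ∑ i ∈ Finset.range m, ∑ j ∈ Finset.range (i+1), ((-1:ℤ)^(i+1+j)) •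
        𝒪.pcast (by omega : m+1+0-1+2-1 = m+1) (𝒪.comp (𝒪.comp p 𝒪.one0 (j+1)) 𝒪.mul (i+1)) := by
    rw [Finset.sum_range_succ']
    simp
  have hQ : ∑ i ∈ Finset.range (m+1), ∑ k ∈ Finset.Ico (i+1) (m+1), -(((-1:ℤ)^(i+k)) •
        𝒪.pcast (by omega : m+1+0-1+2-1 = m+1) (𝒪.comp (𝒪.comp p 𝒪.one0 (k+1)) 𝒪.mul (i+1)))
      = ∑ i ∈ Finset.range m, ∑ k ∈ Finset.Ico (i+1) (m+1), -(((-1:ℤ)^(i+k)) •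
        𝒪.pcast (by omega : m+1+0-1+2-1 = m+1) (𝒪.comp (𝒪.comp p 𝒪.one0 (k+1)) 𝒪.mul (i+1))) := by
    rw [Finset.sum_range_succ]
    simp
  calc ∑ i ∈ Finset.range (m+1), ∑ j ∈ Finset.range (m+1+1),
        ((-1:ℤ)^(j+1)) • ((-1:ℤ)^(i+1)) • 𝒪.comp (𝒪.comp p 𝒪.mul (i+1)) 𝒪.one0 (j+1)
      = ∑ i ∈ Finset.range (m+1),
          ((∑ j ∈ Finset.range i, ((-1:ℤ)^(i+j)) •
            𝒪.pcast (by omega) (𝒪.comp (𝒪.comp p 𝒪.one0 (j+1)) 𝒪.mul i))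
          + ∑ k ∈ Finset.Ico (i+1) (m+1), -(((-1:ℤ)^(i+k)) •
            𝒪.pcast (by omega) (𝒪.comp (𝒪.comp p 𝒪.one0 (k+1)) 𝒪.mul (i+1)))) :=
        Finset.sum_congr rfl step1
    _ = (∑ i ∈ Finset.range (m+1), ∑ j ∈ Finset.range i, ((-1:ℤ)^(i+j)) •
            𝒪.pcast (by omega) (𝒪.comp (𝒪.comp p 𝒪.one0 (j+1)) 𝒪.mul i))
        + ∑ i ∈ Finset.range (m+1), ∑ k ∈ Finset.Ico (i+1) (m+1), -(((-1:ℤ)^(i+k)) •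
            𝒪.pcast (by omega) (𝒪.comp (𝒪.comp p 𝒪.one0 (k+1)) 𝒪.mul (i+1))) :=
        Finset.sum_add_distrib
    _ = (∑ i ∈ Finset.range m, ∑ j ∈ Finset.range (i+1), ((-1:ℤ)^(i+1+j)) •
            𝒪.pcast (by omega) (𝒪.comp (𝒪.comp p 𝒪.one0 (j+1)) 𝒪.mul (i+1)))
        + ∑ i ∈ Finset.range m, ∑ k ∈ Finset.Ico (i+1) (m+1), -(((-1:ℤ)^(i+k)) •
            𝒪.pcast (by omega) (𝒪.comp (𝒪.comp p 𝒪.one0 (k+1)) 𝒪.mul (i+1))) := by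
        rw [hP, hQ]
    _ = ∑ i ∈ Finset.range m,
          ((∑ j ∈ Finset.range (i+1), ((-1:ℤ)^(i+1+j)) •
            𝒪.pcast (by omega) (𝒪.comp (𝒪.comp p 𝒪.one0 (j+1)) 𝒪.mul (i+1)))
          + ∑ k ∈ Finset.Ico (i+1) (m+1), -(((-1:ℤ)^(i+k)) •
            𝒪.pcast (by omega) (𝒪.comp (𝒪.comp p 𝒪.one0 (k+1)) 𝒪.mul (i+1)))) :=
        Finset.sum_add_distrib.symm
    _ = -∑ i ∈ Finset.range m, ∑ k ∈ Finset.range (m+1), ((-1:ℤ)^(i+k)) •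
          𝒪.pcast (by omega) (𝒪.comp (𝒪.comp p 𝒪.one0 (k+1)) 𝒪.mul (i+1)) := by
        rw [← Finset.sum_neg_distrib]
        refine Finset.sum_congr rfl fun i hi => ?_
        have h1 : ∑ j ∈ Finset.range (i+1), ((-1:ℤ)^(i+1+j)) •
              𝒪.pcast (by omega : m+1+0-1+2-1 = m+1) (𝒪.comp (𝒪.comp p 𝒪.one0 (j+1)) 𝒪.mul (i+1))
            = ∑ j ∈ Finset.range (i+1), -(((-1:ℤ)^(i+j)) •
              𝒪.pcast (by omega : m+1+0-1+2-1 = m+1) (𝒪.comp (𝒪.comp p 𝒪.one0 (j+1)) 𝒪.mul (i+1))) :=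
          Finset.sum_congr rfl fun j hj => eps_smul_neg (by omega) _
        rw [h1]
        rw [Finset.range_eq_Ico]
        rw [← Finset.sum_neg_distrib]
        rw [Finset.range_eq_Ico]
        apply Finset.sum_Ico_consecutive _ (Nat.zero_le _)
        have := Finset.mem_range.mp hi; omega

end BigSum
lemma lemA (hm1 : 𝒪.comp 𝒪.mul 𝒪.one0 1 = 𝒪.one1)
    (hm2 : 𝒪.comp 𝒪.mul 𝒪.one0 2 = 𝒪.one1) (m : ℕ) (p : 𝒪.O (m+1)) :
    𝒪.del (𝒪.dd p) = - 𝒪.EE m p := by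
  rw [del, Icc_sum]
  have expand : ∀ j : ℕ, 𝒪.comp (𝒪.dd p) 𝒪.one0 j
      = ((-1:ℤ)^(m+1+1)) • 𝒪.comp (𝒪.pcast (by omega : 2+(m+1)-1 = m+1+1)
          (𝒪.comp 𝒪.mul p 1)) 𝒪.one0 j
        + 𝒪.comp (𝒪.pcast (by omega : 2+(m+1)-1 = m+1+1) (𝒪.comp 𝒪.mul p 2)) 𝒪.one0 j
        + (∑ i ∈ Finset.range (m+1), ((-1:ℤ)^(i+1)) •
            𝒪.comp (𝒪.comp p 𝒪.mul (i+1)) 𝒪.one0 j : 𝒪.O (m+1+1+0-1)) := by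
    intro j
    rw [dd, Icc_sum]
    simp only [comp_add_left, comp_zsmul_left, comp_sum_left]
  calc ∑ j ∈ Finset.range (m+1+1), ((-1:ℤ)^(j+1)) • 𝒪.comp (𝒪.dd p) 𝒪.one0 (j+1)
      = (∑ j ∈ Finset.range (m+1+1), ((-1:ℤ)^(j+1)) • ((-1:ℤ)^(m+1+1)) •
          𝒪.comp (𝒪.pcast (by omega : 2+(m+1)-1 = m+1+1) (𝒪.comp 𝒪.mul p 1)) 𝒪.one0 (j+1))
        + (∑ j ∈ Finset.range (m+1+1), ((-1:ℤ)^(j+1)) •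
          𝒪.comp (𝒪.pcast (by omega : 2+(m+1)-1 = m+1+1) (𝒪.comp 𝒪.mul p 2)) 𝒪.one0 (j+1))
        + (∑ j ∈ Finset.range (m+1+1), ∑ i ∈ Finset.range (m+1),
            ((-1:ℤ)^(j+1)) • ((-1:ℤ)^(i+1)) •
              𝒪.comp (𝒪.comp p 𝒪.mul (i+1)) 𝒪.one0 (j+1) : 𝒪.O (m+1+1+0-1)) := by
        rw [show (∑ j ∈ Finset.range (m+1+1), ((-1:ℤ)^(j+1)) • 𝒪.comp (𝒪.dd p) 𝒪.one0 (j+1))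
            = ∑ j ∈ Finset.range (m+1+1), (((-1:ℤ)^(j+1)) • ((-1:ℤ)^(m+1+1)) •
                𝒪.comp (𝒪.pcast (by omega : 2+(m+1)-1 = m+1+1) (𝒪.comp 𝒪.mul p 1)) 𝒪.one0 (j+1)
              + ((-1:ℤ)^(j+1)) •
                𝒪.comp (𝒪.pcast (by omega : 2+(m+1)-1 = m+1+1) (𝒪.comp 𝒪.mul p 2)) 𝒪.one0 (j+1)
              + (∑ i ∈ Finset.range (m+1), ((-1:ℤ)^(j+1)) • ((-1:ℤ)^(i+1)) •
                  𝒪.comp (𝒪.comp p 𝒪.mul (i+1)) 𝒪.one0 (j+1) : 𝒪.O (m+1+1+0-1)))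
          from Finset.sum_congr rfl fun j _ => by
            rw [expand (j+1), smul_add, smul_add, Finset.smul_sum]]
        rw [Finset.sum_add_distrib, Finset.sum_add_distrib]
    _ = (-(((-1:ℤ)^(m+1)) • ∑ k ∈ Finset.range (m+1), ((-1:ℤ)^(k+1)) •
            𝒪.pcast (by omega) (𝒪.comp 𝒪.mul (𝒪.comp p 𝒪.one0 (k+1)) 1)) + p)
        + (-(∑ k ∈ Finset.range (m+1), ((-1:ℤ)^(k+1)) •
            𝒪.pcast (by omega) (𝒪.comp 𝒪.mul (𝒪.comp p 𝒪.one0 (k+1)) 2)) - p)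
        + (-∑ i ∈ Finset.range m, ∑ k ∈ Finset.range (m+1), ((-1:ℤ)^(i+k)) •
            𝒪.pcast (by omega : m+1+0-1+2-1 = m+1) (𝒪.comp (𝒪.comp p 𝒪.one0 (k+1)) 𝒪.mul (i+1))
            : 𝒪.O (m+1)) := by
        rw [hSA 𝒪 hm2 p, hSB 𝒪 hm1 p, hSC 𝒪 hm1 hm2 p]
    _ = - 𝒪.EE m p := by
        rw [EE]
        abel

end POperad

/-- on a simplicial right brace algebra (with `m ∘₁ 1₀ = 1_O = m ∘₂ 1₀`)
the coboundary `d` and the boundary `∂` anticommute, `∂ ∘ d = - d ∘ ∂`; hence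
`(O, ∂, d)` is a bicomplex with total differential `D = d + ∂`. -/
theorem boundary_coboundary_anticommute {K : Type} [Field K] (𝒪 : POperad K)
    (hm1 : 𝒪.comp 𝒪.mul 𝒪.one0 1 = 𝒪.one1)
    (hm2 : 𝒪.comp 𝒪.mul 𝒪.one0 2 = 𝒪.one1)
    (n : ℕ) (hn : 1 ≤ n) (p : 𝒪.O n) :
    𝒪.del (𝒪.dd p) = - 𝒪.pcast (by omega : n - 1 + 1 = n) (𝒪.dd (𝒪.del p)) := by
  obtain ⟨m, rfl⟩ : ∃ m, n = m+1 := ⟨n-1, by omega⟩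
  exact (𝒪.lemA hm1 hm2 m p).trans (congrArg Neg.neg (𝒪.lemB m p).symm)
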